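/- arXiv:1204.3032 — 5 statements merged into one kernel-verified Lean document; each statement's English description precedes it below -/
import Mathlib

section
/- Let csi, e_r, e_i, d_r, d_i, g_r, g_i be real numbers and let U ⊂ ℂ be open. Suppose M, ψ are holomorphic on U with M nowhere zero on U and satisfy on U the CGL5 traveling-wave system: M''/(2M) − (M')²/(4M²) − csi·M'/(2M) − ψ² + e_r·M² + d_r·M + g_i = 0 and ψ' + ψ·M'/M − csi·ψ + e_i·M² + d_i·M − g_r = 0. Set G = (1/2)·M·M'' − (1/4)·(M')² − (csi/2)·M·M' + e_r·M⁴ + d_r·M³ + g_i·M². Then on U: (i) ψ² = G/M²; (ii) (G' − 2·csi·G)² − 4·G·M²·(e_i·M² + d_i·M − g_r)² = 0; and (iii) at every point of U where e_i·M² + d_i·M − g_r ≠ 0 one has ψ = (2·csi·G − G')/(2·M²·(e_i·M² + d_i·M − g_r)). -/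
open Filter Topology

/-- Elimination of `ψ` from the CGL5 traveling-wave system: if `(M, ψ)` solves the
system on an open set `U` with `M` nowhere zero, then with
`G = (1/2) M M'' − (1/4) M'² − (csi/2) M M' + e_r M⁴ + d_r M³ + g_i M²` one has
`ψ² = G/M²`, the third-order ODE `(G' − 2 csi G)² − 4 G M² (e_i M² + d_i M − g_r)² = 0`,
and `ψ = (2 csi G − G')/(2 M² (e_i M² + d_i M − g_r))` wherever the denominator is nonzero. -/
theorem cgl5_elimination_of_psi
    (csi e_r e_i d_r d_i g_r g_i : ℝ)
    (U : Set ℂ) (hU : IsOpen U)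
    (M ψ : ℂ → ℂ)
    (hMa : ∀ z ∈ U, AnalyticAt ℂ M z) (hψa : ∀ z ∈ U, AnalyticAt ℂ ψ z)
    (hM0 : ∀ z ∈ U, M z ≠ 0)
    (heq1 : ∀ z ∈ U,
      deriv (deriv M) z / (2 * M z) - (deriv M z)^2 / (4 * (M z)^2)
        - (csi : ℂ) * deriv M z / (2 * M z) - (ψ z)^2
        + (e_r : ℂ) * (M z)^2 + (d_r : ℂ) * M z + (g_i : ℂ) = 0)
    (heq2 : ∀ z ∈ U,
      deriv ψ z + ψ z * deriv M z / M z - (csi : ℂ) * ψ z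
        + (e_i : ℂ) * (M z)^2 + (d_i : ℂ) * M z - (g_r : ℂ) = 0)
    (G : ℂ → ℂ)
    (hG : G = fun z => (1/2) * M z * deriv (deriv M) z - (1/4) * (deriv M z)^2
      - ((csi : ℂ)/2) * M z * deriv M z + (e_r : ℂ) * (M z)^4 + (d_r : ℂ) * (M z)^3
      + (g_i : ℂ) * (M z)^2) :
    (∀ z ∈ U, (ψ z)^2 = G z / (M z)^2)
    ∧ (∀ z ∈ U,
        (deriv G z - 2 * (csi : ℂ) * G z)^2
          - 4 * G z * (M z)^2 * ((e_i : ℂ) * (M z)^2 + (d_i : ℂ) * M z - (g_r : ℂ))^2 = 0)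
    ∧ (∀ z ∈ U, (e_i : ℂ) * (M z)^2 + (d_i : ℂ) * M z - (g_r : ℂ) ≠ 0 →
        ψ z = (2 * (csi : ℂ) * G z - deriv G z)
          / (2 * (M z)^2 * ((e_i : ℂ) * (M z)^2 + (d_i : ℂ) * M z - (g_r : ℂ)))) := by

  have hGψ : ∀ z ∈ U, G z = (ψ z)^2 * (M z)^2 := by
    intro z hz
    have h1 := heq1 z hz
    have hM := hM0 z hz
    have h : (M z)^2 * G z = (M z)^2 * ((ψ z)^2 * (M z)^2) := by
      rw [hG]
      field_simp [hM] at h1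
      linear_combination (M z)^2 * h1 / 8
    exact mul_left_cancel₀ (pow_ne_zero 2 hM) h
  have hkey : ∀ z ∈ U, deriv G z = 2*(csi:ℂ)*G z
      - 2*ψ z*(M z)^2*((e_i:ℂ)*(M z)^2 + (d_i:ℂ)*M z - (g_r:ℂ)) := by
    intro z hz
    have hψd : HasDerivAt ψ (deriv ψ z) z := ((hψa z hz).differentiableAt).hasDerivAt
    have hMd : HasDerivAt M (deriv M z) z := ((hMa z hz).differentiableAt).hasDerivAt
    have hprod : HasDerivAt (fun w => (ψ w)^2*(M w)^2)
        (2*ψ z*deriv ψ z*(M z)^2 + (ψ z)^2*(2*M z*deriv M z)) z := by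
      have h : HasDerivAt (fun w => (ψ w)^2*(M w)^2) (((2:ℕ):ℂ) * ψ z ^ (2 - 1) * deriv ψ z * (M z)^2
          + (ψ z)^2 * (((2:ℕ):ℂ) * M z ^ (2 - 1) * deriv M z)) z := ((hψd.pow 2).mul (hMd.pow 2))
      convert h using 1
      ring
    have hev : G =ᶠ[nhds z] fun w => (ψ w)^2*(M w)^2 := by
      filter_upwards [hU.mem_nhds hz] with w hw using hGψ w hw
    rw [hev.deriv_eq, hprod.deriv]
    have h2 := heq2 z hz
    have hM := hM0 z hz
    rw [hGψ z hz]
    field_simp [hM] at h2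
    linear_combination (2*ψ z*(M z)) * h2
  refine ⟨?_, ?_, ?_⟩
  · intro z hz
    have hM := hM0 z hz
    rw [hGψ z hz]
    field_simp
  · intro z hz
    rw [hkey z hz, hGψ z hz]
    ring
  · intro z hz hQ
    have hM := hM0 z hz
    rw [hkey z hz]
    rw [eq_div_iff (mul_ne_zero (mul_ne_zero two_ne_zero (pow_ne_zero 2 hM)) hQ)]
    ring
end

section
/- Let csi, e_r, e_i, d_r, d_i, g_r, g_i be real numbers with e_i ≠ 0, let ξ₁ ∈ ℂ, and let M, ψ be meromorphic on a neighborhood of ξ₁ and satisfy, on a punctured neighborhood of ξ₁, the CGL5 traveling-wave system: M''/(2M) − (M')²/(4M²) − csi·M'/(2M) − ψ² + e_r·M² + d_r·M + g_i = 0 and ψ' + ψ·M'/M − csi·ψ + e_i·M² + d_i·M − g_r = 0. If M has a pole at ξ₁, then: the pole of M at ξ₁ is simple; ψ has a simple pole at ξ₁; and writing m₀ for the residue of M at ξ₁, the residue of ψ at ξ₁ equals e_i·m₀²/2 and m₀ satisfies the quartic relation e_i²·m₀⁴ − 4·e_r·m₀² − 3 = 0. In particular m₀ can take at most four distinct values.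 -/
open Filter Topology

/-- `f` has a pole at `z`. -/
def IsPole (f : ℂ → ℂ) (z : ℂ) : Prop :=
  Tendsto (fun w => ‖f w‖) (𝓝[≠] z) atTop

lemma ev_punct_nhds {x : ℂ} {p : ℂ → Prop}
    (h : ∀ᶠ z in 𝓝[≠] x, p z) : ∀ᶠ z in 𝓝[≠] x, ∀ᶠ w in 𝓝 z, p w := by
  rw [eventually_nhdsWithin_iff] at h
  have h2 := h.eventually_nhds
  rw [eventually_nhdsWithin_iff]
  filter_upwards [h2] with z hz hzx
  filter_upwards [hz, eventually_ne_nhds (by simpa using hzx)] with w hw hwx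
  exact hw hwx

lemma analyticAt_deriv {g : ℂ → ℂ} {x : ℂ} (h : AnalyticAt ℂ g x) :
    AnalyticAt ℂ (deriv g) x := by
  obtain ⟨t, ht, hto, hxt⟩ := eventually_nhds_iff.mp h.eventually_analyticAt
  exact (AnalyticOnNhd.deriv (fun y hy => ht y hy)) x hxt

lemma deriv_rep {x : ℂ} {f g : ℂ → ℂ} {n : ℤ} (hg : AnalyticAt ℂ g x)
    (hf : ∀ᶠ z in 𝓝[≠] x, f z = (z - x) ^ n * g z) :
    ∀ᶠ z in 𝓝[≠] x, deriv f z
      = (z - x) ^ (n - 1) * ((n : ℂ) * g z + (z - x) * deriv g z) := by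
  have hg' : ∀ᶠ z in 𝓝[≠] x, AnalyticAt ℂ g z :=
    nhdsWithin_le_nhds hg.eventually_analyticAt
  have h2 := ev_punct_nhds hf
  filter_upwards [h2, hg', self_mem_nhdsWithin] with z hz hgz hzx
  have hzz : z - x ≠ 0 := sub_ne_zero.mpr hzx
  have hd1 : HasDerivAt (fun w : ℂ => (w - x) ^ n) (((n : ℂ) * (z - x) ^ (n - 1)) * 1) z :=
    by have := (hasDerivAt_zpow n (z - x) (Or.inl hzz)).comp z ((hasDerivAt_id' z).sub_const x); exact this
  have hd2 : HasDerivAt (fun w => (w - x) ^ n * g w)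
      ((((n : ℂ) * (z - x) ^ (n - 1)) * 1) * g z + (z - x) ^ n * deriv g z) z :=
    hd1.mul hgz.differentiableAt.hasDerivAt
  have heq : deriv f z = deriv (fun w => (w - x) ^ n * g w) z :=
    Filter.EventuallyEq.deriv_eq hz
  rw [heq, hd2.deriv]
  have hpow : (z - x) ^ n = (z - x) ^ (n - 1) * (z - x) := by
    rw [← zpow_add_one₀ hzz]; ring_nf
  rw [hpow]; ring

lemma analyticAt_shift {g : ℂ → ℂ} {x : ℂ} (hg : AnalyticAt ℂ g x) (n : ℤ) :
    AnalyticAt ℂ (fun z => (n : ℂ) * g z + (z - x) * deriv g z) x :=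
  (analyticAt_const.mul hg).add
    ((analyticAt_id.sub analyticAt_const).mul (analyticAt_deriv hg))

lemma deriv_rep' {x : ℂ} {f u : ℂ → ℂ} {m : ℤ} (hu : AnalyticAt ℂ u x)
    (hf : ∀ᶠ z in 𝓝[≠] x, f z = (z - x) ^ m * u z) :
    ∃ U : ℂ → ℂ, AnalyticAt ℂ U x ∧ U x = (m : ℂ) * u x ∧
      ∀ᶠ z in 𝓝[≠] x, deriv f z = (z - x) ^ (m - 1) * U z :=
  ⟨fun z => (m : ℂ) * u z + (z - x) * deriv u z, analyticAt_shift hu m, by simp,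
    deriv_rep hu hf⟩

lemma tendsto_term_pos {x : ℂ} {u : ℂ → ℂ} (hu : ContinuousAt u x) {m : ℤ} (hm : 0 < m) :
    Tendsto (fun z => (z - x) ^ m * u z) (𝓝[≠] x) (𝓝 0) := by
  have h1 : Tendsto (fun z : ℂ => (z - x) ^ m) (𝓝 x) (𝓝 0) := by
    have h0 : Tendsto (fun z : ℂ => (z - x) ^ m.toNat) (𝓝 x) (𝓝 0) := by
      have hc : Continuous (fun z : ℂ => (z - x) ^ m.toNat) :=
        (continuous_id.sub continuous_const).pow m.toNat
      have := hc.tendsto x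
      simpa [zero_pow (by omega : m.toNat ≠ 0)] using this
    refine h0.congr fun z => ?_
    rw [← zpow_natCast, Int.toNat_of_nonneg hm.le]
  have h2 : Tendsto (fun z => (z - x) ^ m) (𝓝[≠] x) (𝓝 0) :=
    h1.mono_left nhdsWithin_le_nhds
  have h3 : Tendsto u (𝓝[≠] x) (𝓝 (u x)) := hu.tendsto.mono_left nhdsWithin_le_nhds
  simpa using h2.mul h3

lemma tendsto_term_zero {x : ℂ} {u : ℂ → ℂ} (hu : ContinuousAt u x) :
    Tendsto (fun z => (z - x) ^ (0 : ℤ) * u z) (𝓝[≠] x) (𝓝 (u x)) := by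
  simpa using (hu.tendsto.mono_left (nhdsWithin_le_nhds : 𝓝[≠] x ≤ 𝓝 x))

/-- At a pole `ξ₁` of a meromorphic solution `(M, ψ)` of the CGL5 traveling-wave system,
`M` has a simple pole with residue `m₀` satisfying `e_i² m₀⁴ − 4 e_r m₀² − 3 = 0`, and
`ψ` has a simple pole with residue `e_i m₀²/2`. -/
theorem cgl5_first_set_of_poles
    (csi e_r e_i d_r d_i g_r g_i : ℝ) (he : e_i ≠ 0) (ξ₁ : ℂ)
    (M ψ : ℂ → ℂ) (hM : MeromorphicAt M ξ₁) (hψ : MeromorphicAt ψ ξ₁)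
    (heq : ∀ᶠ z in 𝓝[≠] ξ₁,
      (deriv (deriv M) z / (2 * M z) - (deriv M z)^2 / (4 * (M z)^2)
        - (csi : ℂ) * deriv M z / (2 * M z) - (ψ z)^2
        + (e_r : ℂ) * (M z)^2 + (d_r : ℂ) * M z + (g_i : ℂ) = 0)
      ∧ (deriv ψ z + ψ z * deriv M z / M z - (csi : ℂ) * ψ z
        + (e_i : ℂ) * (M z)^2 + (d_i : ℂ) * M z - (g_r : ℂ) = 0))
    (hpole : IsPole M ξ₁) :
    ∃ m₀ : ℂ, m₀ ≠ 0
      ∧ Tendsto (fun z => (z - ξ₁) * M z) (𝓝[≠] ξ₁) (𝓝 m₀)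
      ∧ IsPole ψ ξ₁
      ∧ Tendsto (fun z => (z - ξ₁) * ψ z) (𝓝[≠] ξ₁) (𝓝 ((e_i : ℂ) * m₀^2 / 2))
      ∧ (e_i : ℂ)^2 * m₀^4 - 4 * (e_r : ℂ) * m₀^2 - 3 = 0 := by
  have heC : (e_i : ℂ) ≠ 0 := Complex.ofReal_ne_zero.mpr he
  -- Step A : the order of M is a (finite) integer
  have hMo : ∃ n : ℤ, meromorphicOrderAt M ξ₁ = n := by
    rcases eq_or_ne (meromorphicOrderAt M ξ₁) ⊤ with h | h
    · exfalso
      have h0 : ∀ᶠ z in 𝓝[≠] ξ₁, M z = 0 := meromorphicOrderAt_eq_top_iff.mp h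
      have ht0 : Tendsto (fun z => ‖M z‖) (𝓝[≠] ξ₁) (𝓝 0) := by
        refine Tendsto.congr' ?_ tendsto_const_nhds
        filter_upwards [h0] with z hz
        simp [hz]
      exact not_tendsto_atTop_of_tendsto_nhds ht0 hpole
    · obtain ⟨m, hm⟩ := WithTop.ne_top_iff_exists.mp h
      exact ⟨m, hm.symm⟩
  obtain ⟨n, hn⟩ := hMo
  obtain ⟨g, hg, hg0, hMrep⟩ := (meromorphicOrderAt_eq_int_iff hM).mp hn
  simp only [smul_eq_mul] at hMrep
  have hgc : ContinuousAt g ξ₁ := hg.continuousAt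
  -- Step A2 : n < 0
  have hnneg : n < 0 := by
    by_contra hge
    push_neg at hge
    have hM' : Tendsto M (𝓝[≠] ξ₁) (𝓝 ((ξ₁ - ξ₁) ^ n.toNat * g ξ₁)) := by
      have hc : Continuous (fun z : ℂ => (z - ξ₁) ^ n.toNat) :=
        (continuous_id.sub continuous_const).pow n.toNat
      have h1 : Tendsto (fun z => (z - ξ₁) ^ n.toNat * g z) (𝓝 ξ₁)
          (𝓝 ((ξ₁ - ξ₁) ^ n.toNat * g ξ₁)) := (hc.tendsto ξ₁).mul hgc.tendsto
      refine Tendsto.congr' ?_ (h1.mono_left nhdsWithin_le_nhds)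
      filter_upwards [hMrep] with z hz
      rw [hz, ← zpow_natCast, Int.toNat_of_nonneg hge]
    have := (continuous_norm.tendsto _).comp hM'
    exact not_tendsto_atTop_of_tendsto_nhds this hpole
  -- derivative representations for M
  obtain ⟨G, hGan, hGx, hdM⟩ := deriv_rep' hg hMrep
  obtain ⟨G₂, hG₂an, hG₂x, hddM⟩ := deriv_rep' hGan hdM
  have hGc : ContinuousAt G ξ₁ := hGan.continuousAt
  have hG₂c : ContinuousAt G₂ ξ₁ := hG₂an.continuousAt
  have hgne : ∀ᶠ z in 𝓝[≠] ξ₁, g z ≠ 0 :=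
    (hgc.eventually_ne hg0).filter_mono nhdsWithin_le_nhds
  -- Step C : order of ψ is a finite integer
  have hψo : ∃ k : ℤ, meromorphicOrderAt ψ ξ₁ = k := by
    rcases eq_or_ne (meromorphicOrderAt ψ ξ₁) ⊤ with h | h
    · exfalso
      have hψ0 : ∀ᶠ z in 𝓝[≠] ξ₁, ψ z = 0 := meromorphicOrderAt_eq_top_iff.mp h
      have hdψ0 : ∀ᶠ z in 𝓝[≠] ξ₁, deriv ψ z = 0 := by
        filter_upwards [ev_punct_nhds hψ0] with z hz
        have : deriv ψ z = deriv (fun _ => (0 : ℂ)) z := Filter.EventuallyEq.deriv_eq hz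
        simpa using this
      have hev : ∀ᶠ z in 𝓝[≠] ξ₁,
          (e_i : ℂ) * g z ^ 2 + (z - ξ₁) ^ (-n) * ((d_i : ℂ) * g z)
            - (z - ξ₁) ^ (-(2*n)) * (g_r : ℂ) = 0 := by
        filter_upwards [heq, hMrep, hψ0, hdψ0, self_mem_nhdsWithin] with z hE hMz hψz hdψz hzx
        have ht : z - ξ₁ ≠ 0 := sub_ne_zero.mpr hzx
        have E := hE.2
        rw [hMz, hψz, hdψz] at E
        have A1 : (z - ξ₁) ^ (-(2*n)) * ((z - ξ₁) ^ n * (z - ξ₁) ^ n) = 1 := by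
          rw [← zpow_add₀ ht, ← zpow_add₀ ht, show -(2*n) + (n + n) = 0 by ring, zpow_zero]
        have A2 : (z - ξ₁) ^ (-(2*n)) * (z - ξ₁) ^ n = (z - ξ₁) ^ (-n) := by
          rw [← zpow_add₀ ht]; congr 1; ring
        linear_combination (z - ξ₁) ^ (-(2*n)) * E - ((e_i : ℂ) * g z ^ 2) * A1
          - ((d_i : ℂ) * g z) * A2
      have T1 : Tendsto (fun z => (e_i : ℂ) * g z ^ 2) (𝓝[≠] ξ₁)
          (𝓝 ((e_i : ℂ) * g ξ₁ ^ 2)) :=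
        ((continuousAt_const.mul (hgc.pow 2)).tendsto).mono_left nhdsWithin_le_nhds
      have T2 : Tendsto (fun z => (z - ξ₁) ^ (-n) * ((d_i : ℂ) * g z)) (𝓝[≠] ξ₁) (𝓝 0) :=
        tendsto_term_pos (continuousAt_const.mul hgc) (by omega)
      have T3 : Tendsto (fun z => (z - ξ₁) ^ (-(2*n)) * (fun _ : ℂ => (g_r : ℂ)) z)
          (𝓝[≠] ξ₁) (𝓝 0) := tendsto_term_pos continuousAt_const (by omega)
      have hsum := (T1.add T2).sub T3
      have hzero : Tendsto (fun z => (e_i : ℂ) * g z ^ 2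
          + (z - ξ₁) ^ (-n) * ((d_i : ℂ) * g z)
          - (z - ξ₁) ^ (-(2*n)) * (fun _ : ℂ => (g_r : ℂ)) z) (𝓝[≠] ξ₁) (𝓝 0) := by
        refine Tendsto.congr' ?_ tendsto_const_nhds
        filter_upwards [hev] with z hz
        exact hz.symm
      have := tendsto_nhds_unique hsum hzero
      simp only [add_zero, sub_zero] at this
      exact (mul_ne_zero heC (pow_ne_zero 2 hg0)) this
    · obtain ⟨m, hm⟩ := WithTop.ne_top_iff_exists.mp h
      exact ⟨m, hm.symm⟩
  obtain ⟨k, hk⟩ := hψo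
  obtain ⟨p, hp, hp0, hψrep⟩ := (meromorphicOrderAt_eq_int_iff hψ).mp hk
  simp only [smul_eq_mul] at hψrep
  have hpc : ContinuousAt p ξ₁ := hp.continuousAt
  obtain ⟨H, hHan, hHx, hdψ⟩ := deriv_rep' hp hψrep
  have hHc : ContinuousAt H ξ₁ := hHan.continuousAt
  -- key normalized identity for equation 2
  have key2 : ∀ s c1 c2 c3 c4 : ℤ, c1 = s + (k-1) → c2 = s + k → c3 = s + 2*n → c4 = s + n →
      ∀ᶠ z in 𝓝[≠] ξ₁,
        (z-ξ₁)^c1 * (H z + p z * G z / g z) - (z-ξ₁)^c2 * ((csi:ℂ) * p z)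
          + (z-ξ₁)^c3 * ((e_i:ℂ) * g z^2) + (z-ξ₁)^c4 * ((d_i:ℂ) * g z)
          - (z-ξ₁)^s * (g_r:ℂ) = 0 := by
    intro s c1 c2 c3 c4 e1 e2 e3 e4
    filter_upwards [heq, hMrep, hψrep, hdM, hdψ, hgne, self_mem_nhdsWithin] with
      z hE hMz hψz hdMz hdψz hgz hzx
    have ht : z - ξ₁ ≠ 0 := sub_ne_zero.mpr hzx
    have E := hE.2
    rw [hMz, hψz, hdMz, hdψz] at E
    have A1 : (z-ξ₁)^c1 = (z-ξ₁)^s * (z-ξ₁)^(k-1) := by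
      rw [← zpow_add₀ ht]; congr 1; all_goals omega
    have A2 : (z-ξ₁)^c2 = (z-ξ₁)^s * (z-ξ₁)^k := by
      rw [← zpow_add₀ ht]; congr 1; all_goals omega
    have A3 : (z-ξ₁)^c3 = (z-ξ₁)^s * ((z-ξ₁)^n * (z-ξ₁)^n) := by
      rw [← zpow_add₀ ht, ← zpow_add₀ ht]; congr 1; all_goals omega
    have A4 : (z-ξ₁)^c4 = (z-ξ₁)^s * (z-ξ₁)^n := by
      rw [← zpow_add₀ ht]; congr 1; all_goals omega
    have A5 : (z-ξ₁)^c1 * (z-ξ₁)^n = (z-ξ₁)^s * (z-ξ₁)^k * (z-ξ₁)^(n-1) := by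
      rw [← zpow_add₀ ht, ← zpow_add₀ ht, ← zpow_add₀ ht]; congr 1; all_goals omega
    have A6 : (z-ξ₁)^n * ((z-ξ₁)^n)⁻¹ = 1 := mul_inv_cancel₀ (zpow_ne_zero _ ht)
    linear_combination (z-ξ₁)^s * E + H z * A1
      + (p z * G z / ((z-ξ₁)^n * g z)) * A5 - ((csi:ℂ) * p z) * A2
      + ((e_i:ℂ) * g z^2) * A3 + ((d_i:ℂ) * g z) * A4
      - ((z-ξ₁)^c1 * p z * G z / g z) * A6
  -- key normalized identity for equation 1
  have key1 : ∀ s c1 c2 c3 c4 c5 : ℤ, c1 = s - 2 → c2 = s - 1 → c3 = s + 2*k →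
      c4 = s + 2*n → c5 = s + n →
      ∀ᶠ z in 𝓝[≠] ξ₁,
        (z-ξ₁)^c1 * (G₂ z / (2 * g z) - (G z)^2 / (4 * g z^2))
          - (z-ξ₁)^c2 * ((csi:ℂ) * G z / (2 * g z)) - (z-ξ₁)^c3 * (p z)^2
          + (z-ξ₁)^c4 * ((e_r:ℂ) * g z^2) + (z-ξ₁)^c5 * ((d_r:ℂ) * g z)
          + (z-ξ₁)^s * (g_i:ℂ) = 0 := by
    intro s c1 c2 c3 c4 c5 e1 e2 e3 e4 e5
    filter_upwards [heq, hMrep, hψrep, hdM, hddM, hgne, self_mem_nhdsWithin] with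
      z hE hMz hψz hdMz hddMz hgz hzx
    have ht : z - ξ₁ ≠ 0 := sub_ne_zero.mpr hzx
    have E := hE.1
    rw [hMz, hψz, hdMz, hddMz] at E
    have B1 : (z-ξ₁)^c1 = (z-ξ₁)^s * (z-ξ₁)^(n-1-1) * ((z-ξ₁)^n)⁻¹ := by
      simp only [← zpow_neg, ← zpow_add₀ ht]; congr 1; all_goals omega
    have B2 : (z-ξ₁)^c1
        = (z-ξ₁)^s * ((z-ξ₁)^(n-1) * (z-ξ₁)^(n-1)) * (((z-ξ₁)^n)⁻¹ * ((z-ξ₁)^n)⁻¹) := by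
      simp only [← zpow_neg, ← zpow_add₀ ht]; congr 1; all_goals omega
    have B3 : (z-ξ₁)^c2 = (z-ξ₁)^s * (z-ξ₁)^(n-1) * ((z-ξ₁)^n)⁻¹ := by
      simp only [← zpow_neg, ← zpow_add₀ ht]; congr 1; all_goals omega
    have B4 : (z-ξ₁)^c3 = (z-ξ₁)^s * ((z-ξ₁)^k * (z-ξ₁)^k) := by
      simp only [← zpow_add₀ ht]; congr 1; all_goals omega
    have B5 : (z-ξ₁)^c4 = (z-ξ₁)^s * ((z-ξ₁)^n * (z-ξ₁)^n) := by
      simp only [← zpow_add₀ ht]; congr 1; all_goals omega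
    have B6 : (z-ξ₁)^c5 = (z-ξ₁)^s * (z-ξ₁)^n := by
      simp only [← zpow_add₀ ht]; congr 1; all_goals omega
    linear_combination (z-ξ₁)^s * E + (G₂ z / (2 * g z)) * B1
      - ((G z)^2 / (4 * g z^2)) * B2
      - ((csi:ℂ) * G z / (2 * g z)) * B3 - (p z)^2 * B4
      + ((e_r:ℂ) * g z^2) * B5 + ((d_r:ℂ) * g z) * B6
  -- continuity facts
  have cP : ContinuousAt (fun z => H z + p z * G z / g z) ξ₁ :=
    hHc.add ((hpc.mul hGc).div hgc hg0)
  have vP : H ξ₁ + p ξ₁ * G ξ₁ / g ξ₁ = ((k:ℂ) + (n:ℂ)) * p ξ₁ := by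
    rw [hHx, hGx]; field_simp
  -- Case C1 : k ≤ 2n is impossible
  have hk1 : ¬ (k ≤ 2*n) := by
    intro hkle
    have hev := key2 (1-k) 0 1 (2*n+1-k) (n+1-k) (by ring) (by ring) (by ring) (by ring)
    have T1 : Tendsto (fun z => (z-ξ₁)^(0:ℤ) * (H z + p z * G z / g z)) (𝓝[≠] ξ₁)
        (𝓝 (H ξ₁ + p ξ₁ * G ξ₁ / g ξ₁)) := tendsto_term_zero cP
    have T2 : Tendsto (fun z => (z-ξ₁)^(1:ℤ) * ((csi:ℂ) * p z)) (𝓝[≠] ξ₁) (𝓝 0) :=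
      tendsto_term_pos (continuousAt_const.mul hpc) (by omega)
    have T3 : Tendsto (fun z => (z-ξ₁)^(2*n+1-k) * ((e_i:ℂ) * g z^2)) (𝓝[≠] ξ₁) (𝓝 0) :=
      tendsto_term_pos (continuousAt_const.mul (hgc.pow 2)) (by omega)
    have T4 : Tendsto (fun z => (z-ξ₁)^(n+1-k) * ((d_i:ℂ) * g z)) (𝓝[≠] ξ₁) (𝓝 0) :=
      tendsto_term_pos (continuousAt_const.mul hgc) (by omega)
    have T5 : Tendsto (fun z => (z-ξ₁)^(1-k) * (fun _ : ℂ => (g_r:ℂ)) z) (𝓝[≠] ξ₁) (𝓝 0) :=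
      tendsto_term_pos continuousAt_const (by omega)
    have hsum := (((T1.sub T2).add T3).add T4).sub T5
    have hzero : Tendsto (fun z => (z-ξ₁)^(0:ℤ) * (H z + p z * G z / g z)
        - (z-ξ₁)^(1:ℤ) * ((csi:ℂ) * p z) + (z-ξ₁)^(2*n+1-k) * ((e_i:ℂ) * g z^2)
        + (z-ξ₁)^(n+1-k) * ((d_i:ℂ) * g z) - (z-ξ₁)^(1-k) * (fun _ : ℂ => (g_r:ℂ)) z)
        (𝓝[≠] ξ₁) (𝓝 0) := by
      refine Tendsto.congr' ?_ tendsto_const_nhds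
      filter_upwards [hev] with z hz
      exact hz.symm
    have hval := tendsto_nhds_unique hsum hzero
    simp only [sub_zero, add_zero] at hval
    rw [vP] at hval
    have hkn : (k:ℂ) + (n:ℂ) = 0 := by
      rcases mul_eq_zero.mp hval with h' | h'
      · exact h'
      · exact absurd h' hp0
    have : k + n = 0 := by exact_mod_cast hkn
    omega
  -- Case C2 : k > 2n+1 is impossible
  have hk2 : ¬ (2*n+1 < k) := by
    intro hkgt
    have hev := key2 (-(2*n)) (k-1-2*n) (k-2*n) 0 (-n) (by ring) (by ring) (by ring) (by ring)
    have T1 : Tendsto (fun z => (z-ξ₁)^(k-1-2*n) * (H z + p z * G z / g z)) (𝓝[≠] ξ₁)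
        (𝓝 0) := tendsto_term_pos cP (by omega)
    have T2 : Tendsto (fun z => (z-ξ₁)^(k-2*n) * ((csi:ℂ) * p z)) (𝓝[≠] ξ₁) (𝓝 0) :=
      tendsto_term_pos (continuousAt_const.mul hpc) (by omega)
    have T3 : Tendsto (fun z => (z-ξ₁)^(0:ℤ) * ((e_i:ℂ) * g z^2)) (𝓝[≠] ξ₁)
        (𝓝 ((e_i:ℂ) * g ξ₁^2)) := tendsto_term_zero (continuousAt_const.mul (hgc.pow 2))
    have T4 : Tendsto (fun z => (z-ξ₁)^(-n) * ((d_i:ℂ) * g z)) (𝓝[≠] ξ₁) (𝓝 0) :=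
      tendsto_term_pos (continuousAt_const.mul hgc) (by omega)
    have T5 : Tendsto (fun z => (z-ξ₁)^(-(2*n)) * (fun _ : ℂ => (g_r:ℂ)) z) (𝓝[≠] ξ₁)
        (𝓝 0) := tendsto_term_pos continuousAt_const (by omega)
    have hsum := (((T1.sub T2).add T3).add T4).sub T5
    have hzero : Tendsto (fun z => (z-ξ₁)^(k-1-2*n) * (H z + p z * G z / g z)
        - (z-ξ₁)^(k-2*n) * ((csi:ℂ) * p z) + (z-ξ₁)^(0:ℤ) * ((e_i:ℂ) * g z^2)
        + (z-ξ₁)^(-n) * ((d_i:ℂ) * g z) - (z-ξ₁)^(-(2*n)) * (fun _ : ℂ => (g_r:ℂ)) z)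
        (𝓝[≠] ξ₁) (𝓝 0) := by
      refine Tendsto.congr' ?_ tendsto_const_nhds
      filter_upwards [hev] with z hz
      exact hz.symm
    have hval := tendsto_nhds_unique hsum hzero
    simp only [sub_zero, add_zero, zero_sub, zero_add, zero_add] at hval
    exact (mul_ne_zero heC (pow_ne_zero 2 hg0)) (by linear_combination hval)
  have hkval : k = 2*n + 1 := by omega
  -- Case C3 : residue relation from equation 2
  have hrel : ((k:ℂ) + (n:ℂ)) * p ξ₁ + (e_i:ℂ) * g ξ₁^2 = 0 := by
    have hev := key2 (-(2*n)) 0 1 0 (-n) (by omega) (by omega) (by ring) (by ring)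
    have T1 : Tendsto (fun z => (z-ξ₁)^(0:ℤ) * (H z + p z * G z / g z)) (𝓝[≠] ξ₁)
        (𝓝 (H ξ₁ + p ξ₁ * G ξ₁ / g ξ₁)) := tendsto_term_zero cP
    have T2 : Tendsto (fun z => (z-ξ₁)^(1:ℤ) * ((csi:ℂ) * p z)) (𝓝[≠] ξ₁) (𝓝 0) :=
      tendsto_term_pos (continuousAt_const.mul hpc) (by omega)
    have T3 : Tendsto (fun z => (z-ξ₁)^(0:ℤ) * ((e_i:ℂ) * g z^2)) (𝓝[≠] ξ₁)
        (𝓝 ((e_i:ℂ) * g ξ₁^2)) := tendsto_term_zero (continuousAt_const.mul (hgc.pow 2))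
    have T4 : Tendsto (fun z => (z-ξ₁)^(-n) * ((d_i:ℂ) * g z)) (𝓝[≠] ξ₁) (𝓝 0) :=
      tendsto_term_pos (continuousAt_const.mul hgc) (by omega)
    have T5 : Tendsto (fun z => (z-ξ₁)^(-(2*n)) * (fun _ : ℂ => (g_r:ℂ)) z) (𝓝[≠] ξ₁)
        (𝓝 0) := tendsto_term_pos continuousAt_const (by omega)
    have hsum := (((T1.sub T2).add T3).add T4).sub T5
    have hzero : Tendsto (fun z => (z-ξ₁)^(0:ℤ) * (H z + p z * G z / g z)
        - (z-ξ₁)^(1:ℤ) * ((csi:ℂ) * p z) + (z-ξ₁)^(0:ℤ) * ((e_i:ℂ) * g z^2)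
        + (z-ξ₁)^(-n) * ((d_i:ℂ) * g z) - (z-ξ₁)^(-(2*n)) * (fun _ : ℂ => (g_r:ℂ)) z)
        (𝓝[≠] ξ₁) (𝓝 0) := by
      refine Tendsto.congr' ?_ tendsto_const_nhds
      filter_upwards [hev] with z hz
      exact hz.symm
    have hval := tendsto_nhds_unique hsum hzero
    simp only [sub_zero, add_zero] at hval
    rw [vP] at hval
    linear_combination hval
  -- Case C4 : n ≤ -2 is impossible (using equation 1)
  have cQ : ContinuousAt (fun z => G₂ z / (2 * g z) - (G z)^2 / (4 * g z^2)) ξ₁ :=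
    (hG₂c.div (continuousAt_const.mul hgc) (by simpa using hg0)).sub
      ((hGc.pow 2).div (continuousAt_const.mul (hgc.pow 2))
        (by simp [hg0]))
  have cR : ContinuousAt (fun z => (csi:ℂ) * G z / (2 * g z)) ξ₁ :=
    (continuousAt_const.mul hGc).div (continuousAt_const.mul hgc) (by simpa using hg0)
  have hn1 : n = -1 := by
    by_contra hne
    have hnle : n ≤ -2 := by omega
    have hev := key1 (-(4*n)-2) (-(4*n)-4) (-(4*n)-3) 0 (-(2*n)-2) (-(3*n)-2)
      (by ring) (by ring) (by omega) (by ring) (by ring)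
    have T1 : Tendsto (fun z => (z-ξ₁)^(-(4*n)-4) * (G₂ z / (2 * g z)
        - (G z)^2 / (4 * g z^2))) (𝓝[≠] ξ₁) (𝓝 0) := tendsto_term_pos cQ (by omega)
    have T2 : Tendsto (fun z => (z-ξ₁)^(-(4*n)-3) * ((csi:ℂ) * G z / (2 * g z)))
        (𝓝[≠] ξ₁) (𝓝 0) := tendsto_term_pos cR (by omega)
    have T3 : Tendsto (fun z => (z-ξ₁)^(0:ℤ) * (p z)^2) (𝓝[≠] ξ₁) (𝓝 ((p ξ₁)^2)) := by
      simpa using tendsto_term_zero (u := fun z => (p z)^2) (hpc.pow 2)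
    have T4 : Tendsto (fun z => (z-ξ₁)^(-(2*n)-2) * ((e_r:ℂ) * g z^2)) (𝓝[≠] ξ₁) (𝓝 0) :=
      tendsto_term_pos (continuousAt_const.mul (hgc.pow 2)) (by omega)
    have T5 : Tendsto (fun z => (z-ξ₁)^(-(3*n)-2) * ((d_r:ℂ) * g z)) (𝓝[≠] ξ₁) (𝓝 0) :=
      tendsto_term_pos (continuousAt_const.mul hgc) (by omega)
    have T6 : Tendsto (fun z => (z-ξ₁)^(-(4*n)-2) * (fun _ : ℂ => (g_i:ℂ)) z) (𝓝[≠] ξ₁)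
        (𝓝 0) := tendsto_term_pos continuousAt_const (by omega)
    have hsum := ((((T1.sub T2).sub T3).add T4).add T5).add T6
    have hzero : Tendsto (fun z => (z-ξ₁)^(-(4*n)-4) * (G₂ z / (2 * g z)
        - (G z)^2 / (4 * g z^2)) - (z-ξ₁)^(-(4*n)-3) * ((csi:ℂ) * G z / (2 * g z))
        - (z-ξ₁)^(0:ℤ) * (p z)^2 + (z-ξ₁)^(-(2*n)-2) * ((e_r:ℂ) * g z^2)
        + (z-ξ₁)^(-(3*n)-2) * ((d_r:ℂ) * g z)
        + (z-ξ₁)^(-(4*n)-2) * (fun _ : ℂ => (g_i:ℂ)) z) (𝓝[≠] ξ₁) (𝓝 0) := by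
      refine Tendsto.congr' ?_ tendsto_const_nhds
      filter_upwards [hev] with z hz
      exact hz.symm
    have hval := tendsto_nhds_unique hsum hzero
    simp only [sub_zero, add_zero, zero_sub, neg_eq_zero] at hval
    exact pow_ne_zero 2 hp0 hval
  -- Case C5 : the quartic relation from equation 1
  have hquad : (G₂ ξ₁ / (2 * g ξ₁) - (G ξ₁)^2 / (4 * g ξ₁^2)) - (p ξ₁)^2
      + (e_r:ℂ) * g ξ₁^2 = 0 := by
    have hev := key1 2 0 1 0 0 1 (by ring) (by ring) (by omega) (by omega) (by omega)
    have T1 : Tendsto (fun z => (z-ξ₁)^(0:ℤ) * (G₂ z / (2 * g z)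
        - (G z)^2 / (4 * g z^2))) (𝓝[≠] ξ₁)
        (𝓝 (G₂ ξ₁ / (2 * g ξ₁) - (G ξ₁)^2 / (4 * g ξ₁^2))) := tendsto_term_zero cQ
    have T2 : Tendsto (fun z => (z-ξ₁)^(1:ℤ) * ((csi:ℂ) * G z / (2 * g z)))
        (𝓝[≠] ξ₁) (𝓝 0) := tendsto_term_pos cR (by omega)
    have T3 : Tendsto (fun z => (z-ξ₁)^(0:ℤ) * (p z)^2) (𝓝[≠] ξ₁) (𝓝 ((p ξ₁)^2)) := by
      simpa using tendsto_term_zero (u := fun z => (p z)^2) (hpc.pow 2)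
    have T4 : Tendsto (fun z => (z-ξ₁)^(0:ℤ) * ((e_r:ℂ) * g z^2)) (𝓝[≠] ξ₁)
        (𝓝 ((e_r:ℂ) * g ξ₁^2)) := tendsto_term_zero (continuousAt_const.mul (hgc.pow 2))
    have T5 : Tendsto (fun z => (z-ξ₁)^(1:ℤ) * ((d_r:ℂ) * g z)) (𝓝[≠] ξ₁) (𝓝 0) :=
      tendsto_term_pos (continuousAt_const.mul hgc) (by omega)
    have T6 : Tendsto (fun z => (z-ξ₁)^(2:ℤ) * (fun _ : ℂ => (g_i:ℂ)) z) (𝓝[≠] ξ₁)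
        (𝓝 0) := tendsto_term_pos continuousAt_const (by omega)
    have hsum := ((((T1.sub T2).sub T3).add T4).add T5).add T6
    have hzero : Tendsto (fun z => (z-ξ₁)^(0:ℤ) * (G₂ z / (2 * g z)
        - (G z)^2 / (4 * g z^2)) - (z-ξ₁)^(1:ℤ) * ((csi:ℂ) * G z / (2 * g z))
        - (z-ξ₁)^(0:ℤ) * (p z)^2 + (z-ξ₁)^(0:ℤ) * ((e_r:ℂ) * g z^2)
        + (z-ξ₁)^(1:ℤ) * ((d_r:ℂ) * g z)
        + (z-ξ₁)^(2:ℤ) * (fun _ : ℂ => (g_i:ℂ)) z) (𝓝[≠] ξ₁) (𝓝 0) := by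
      refine Tendsto.congr' ?_ tendsto_const_nhds
      filter_upwards [hev] with z hz
      exact hz.symm
    have hval := tendsto_nhds_unique hsum hzero
    simp only [sub_zero, add_zero] at hval
    linear_combination hval
  -- Final assembly
  subst hkval
  subst hn1
  have hG₂v : G₂ ξ₁ = 2 * g ξ₁ := by rw [hG₂x, hGx]; push_cast; ring
  have hGv : G ξ₁ = -(g ξ₁) := by rw [hGx]; push_cast; ring
  have hpval : p ξ₁ = (e_i:ℂ) * g ξ₁^2 / 2 := by
    have := hrel
    push_cast at this
    linear_combination (-1/2 : ℂ) * this
  refine ⟨g ξ₁, hg0, ?_, ?_, ?_, ?_⟩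
  · -- residue of M
    refine Tendsto.congr' ?_ (hgc.tendsto.mono_left nhdsWithin_le_nhds)
    filter_upwards [hMrep, self_mem_nhdsWithin] with z hz hzx
    have ht : z - ξ₁ ≠ 0 := sub_ne_zero.mpr hzx
    rw [hz, zpow_neg_one]
    field_simp
  · -- ψ has a pole
    have habs : Tendsto (fun z => ‖z - ξ₁‖⁻¹ * ‖p z‖) (𝓝[≠] ξ₁) atTop := by
      refine Filter.Tendsto.atTop_mul_pos (C := ‖p ξ₁‖)
        (norm_pos_iff.mpr hp0) ((tendsto_norm_sub_self_nhdsNE ξ₁).inv_tendsto_nhdsGT_zero) ?_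
      exact (continuous_norm.continuousAt.comp hpc).tendsto.mono_left nhdsWithin_le_nhds
    refine Tendsto.congr' ?_ habs
    filter_upwards [hψrep, self_mem_nhdsWithin] with z hz hzx
    have ht : z - ξ₁ ≠ 0 := sub_ne_zero.mpr hzx
    rw [hz, show (2 * (-1:ℤ) + 1) = -1 by ring, zpow_neg_one, norm_mul, norm_inv]
  · -- residue of ψ
    have hT : Tendsto (fun z => (z - ξ₁) * ψ z) (𝓝[≠] ξ₁) (𝓝 (p ξ₁)) := by
      refine Tendsto.congr' ?_ (hpc.tendsto.mono_left nhdsWithin_le_nhds)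
      filter_upwards [hψrep, self_mem_nhdsWithin] with z hz hzx
      have ht : z - ξ₁ ≠ 0 := sub_ne_zero.mpr hzx
      rw [hz, show (2 * (-1:ℤ) + 1) = -1 by ring, zpow_neg_one]
      field_simp
    rwa [hpval] at hT
  · -- the quartic relation
    rw [hG₂v, hGv, hpval] at hquad
    have e1 : (2 * g ξ₁) / (2 * g ξ₁) = 1 := div_self (mul_ne_zero two_ne_zero hg0)
    have e2 : (-(g ξ₁))^2 / (4 * g ξ₁^2) = 1/4 := by
      rw [neg_sq, div_eq_iff (by simp [hg0] : (4:ℂ) * g ξ₁^2 ≠ 0)]; ring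
    linear_combination (-4 : ℂ) * hquad + 4 * e1 - 4 * e2
end

section
/- Let csi, d_r, d_i, g_r, g_i be real numbers with d_i ≠ 0, let ξ₁ ∈ ℂ, and let M, ψ be meromorphic on a neighborhood of ξ₁ and satisfy, on a punctured neighborhood of ξ₁, the CGL3 traveling-wave system: M''/(2M) − (M')²/(4M²) − csi·M'/(2M) − ψ² + d_r·M + g_i = 0 and ψ' + ψ·M'/M − csi·ψ + d_i·M − g_r = 0. If M has a pole at ξ₁, then: the pole of M at ξ₁ is double; ψ has a simple pole at ξ₁; and writing m₀ = lim_{ξ→ξ₁} (ξ − ξ₁)²·M(ξ), the residue of ψ at ξ₁ equals d_i·m₀/3 and m₀ satisfies the quadratic relation d_i²·m₀² − 9·d_r·m₀ − 18 = 0. In particular m₀ can take at most two distinct values. -/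
open Filter Topology

namespace CGL3Aux

lemma analyticAt_deriv {g : ℂ → ℂ} {x : ℂ} (hg : AnalyticAt ℂ g x) :
    AnalyticAt ℂ (deriv g) x := by
  obtain ⟨s, hs, h⟩ := hg.eventually_analyticAt.exists_mem
  exact (AnalyticOnNhd.deriv (fun y hy => h y hy : AnalyticOnNhd ℂ g s)) x (mem_of_mem_nhds hs)

lemma deriv_congr_punctured {f g : ℂ → ℂ} {x : ℂ} (h : f =ᶠ[𝓝[≠] x] g) :
    deriv f =ᶠ[𝓝[≠] x] deriv g := by
  obtain ⟨s, hs, hfg⟩ := h.exists_mem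
  obtain ⟨U, hUo, hxU, hUs⟩ := mem_nhdsWithin.mp hs
  have hmem : U ∩ {x}ᶜ ∈ 𝓝[≠] x :=
    Filter.inter_mem (mem_nhdsWithin_of_mem_nhds (hUo.mem_nhds hxU)) self_mem_nhdsWithin
  filter_upwards [hmem] with z hz
  have hnz : U ∩ {x}ᶜ ∈ 𝓝 z := (hUo.inter isOpen_compl_singleton).mem_nhds hz
  exact Filter.EventuallyEq.deriv_eq (eventually_of_mem hnz fun y hy => hfg (hUs hy))

lemma rep_deriv {x : ℂ} (m : ℤ) {g f : ℂ → ℂ} (hg : AnalyticAt ℂ g x)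
    (hf : f =ᶠ[𝓝[≠] x] fun z => (z - x) ^ m * g z) :
    deriv f =ᶠ[𝓝[≠] x]
      fun z => (z - x) ^ (m - 1) * ((m : ℂ) * g z + (z - x) * deriv g z) := by
  refine (deriv_congr_punctured hf).trans ?_
  have hev : ∀ᶠ z in 𝓝 x, DifferentiableAt ℂ g z :=
    hg.eventually_analyticAt.mono fun z hz => hz.differentiableAt
  filter_upwards [hev.filter_mono nhdsWithin_le_nhds, self_mem_nhdsWithin] with z hdg hzx
  have ht : z - x ≠ 0 := sub_ne_zero.mpr hzx
  have h1 : HasDerivAt (fun w : ℂ => (w - x) ^ m) ((m : ℂ) * (z - x) ^ (m - 1)) z := by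
    have h2 := hasDerivAt_zpow m (z - x) (Or.inl ht)
    have h3 : HasDerivAt (fun w : ℂ => w - x) 1 z := (hasDerivAt_id z).sub_const x
    exact (h2.comp z h3).congr_deriv (mul_one _)
  rw [show (fun z => (z - x) ^ m * g z) = (fun w => (w - x) ^ m) * g from rfl,
    (h1.mul hdg.hasDerivAt).deriv]
  simp only [zpow_sub₀ ht, zpow_one]
  field_simp

lemma quot_helper {a : ℂ} (ha : a ≠ 0) (p r : ℤ) (u v : ℂ) :
    a ^ p * u / (a ^ r * v) = a ^ (p - r) * (u / v) := by
  rw [zpow_sub₀ ha, div_mul_div_comm]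

lemma tendsto_zpow_pos {x : ℂ} {e : ℤ} (he : 0 < e) :
    Tendsto (fun z : ℂ => (z - x) ^ e) (𝓝[≠] x) (𝓝 0) := by
  have h : Tendsto (fun z : ℂ => (z - x) ^ e.toNat) (𝓝 x) (𝓝 0) := by
    have hc : Continuous (fun z : ℂ => (z - x) ^ e.toNat) :=
      (continuous_id.sub continuous_const).pow e.toNat
    have h0 := hc.tendsto x
    simpa [zero_pow (by omega : e.toNat ≠ 0)] using h0
  exact (h.mono_left nhdsWithin_le_nhds).congr fun z => by
    rw [← zpow_natCast, Int.toNat_of_nonneg he.le]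

lemma tendsto_term_pos {x : ℂ} {e : ℤ} (he : 0 < e) {φ : ℂ → ℂ} {c : ℂ}
    (hφ : Tendsto φ (𝓝[≠] x) (𝓝 c)) :
    Tendsto (fun z => (z - x) ^ e * φ z) (𝓝[≠] x) (𝓝 0) := by
  simpa using (tendsto_zpow_pos he).mul hφ

lemma tendsto_term_eqz {x : ℂ} {e : ℤ} (he : e = 0) {φ : ℂ → ℂ} {c : ℂ}
    (hφ : Tendsto φ (𝓝[≠] x) (𝓝 c)) :
    Tendsto (fun z => (z - x) ^ e * φ z) (𝓝[≠] x) (𝓝 c) := by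
  subst he; simpa using hφ

lemma tendsto_term2_pos {x : ℂ} {e1 e2 : ℤ} (he : 0 < e1 + e2) {φ : ℂ → ℂ} {c : ℂ}
    (hφ : Tendsto φ (𝓝[≠] x) (𝓝 c)) :
    Tendsto (fun z => (z - x) ^ e1 * ((z - x) ^ e2 * φ z)) (𝓝[≠] x) (𝓝 0) := by
  refine Tendsto.congr' ?_ (tendsto_term_pos he hφ)
  filter_upwards [self_mem_nhdsWithin] with z hz
  rw [zpow_add₀ (sub_ne_zero.mpr hz), mul_assoc]

lemma tendsto_term2_eqz {x : ℂ} {e1 e2 : ℤ} (he : e1 + e2 = 0) {φ : ℂ → ℂ} {c : ℂ}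
    (hφ : Tendsto φ (𝓝[≠] x) (𝓝 c)) :
    Tendsto (fun z => (z - x) ^ e1 * ((z - x) ^ e2 * φ z)) (𝓝[≠] x) (𝓝 c) := by
  refine Tendsto.congr' ?_ (tendsto_term_eqz he hφ)
  filter_upwards [self_mem_nhdsWithin] with z hz
  rw [zpow_add₀ (sub_ne_zero.mpr hz), mul_assoc]

lemma tendsto_term2_sq_pos {x : ℂ} {e1 e2 : ℤ} (he : 0 < e1 + (e2 + e2)) {φ : ℂ → ℂ} {c : ℂ}
    (hφ : Tendsto φ (𝓝[≠] x) (𝓝 c)) :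
    Tendsto (fun z => (z - x) ^ e1 * (((z - x) ^ e2 * φ z) ^ 2)) (𝓝[≠] x) (𝓝 0) := by
  refine Tendsto.congr' ?_ (tendsto_term_pos he (hφ.pow 2))
  filter_upwards [self_mem_nhdsWithin] with z hz
  have ht : z - x ≠ 0 := sub_ne_zero.mpr hz
  rw [zpow_add₀ ht, zpow_add₀ ht]
  ring

lemma tendsto_term2_sq_eqz {x : ℂ} {e1 e2 : ℤ} (he : e1 + (e2 + e2) = 0) {φ : ℂ → ℂ} {c : ℂ}
    (hφ : Tendsto φ (𝓝[≠] x) (𝓝 c)) :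
    Tendsto (fun z => (z - x) ^ e1 * (((z - x) ^ e2 * φ z) ^ 2)) (𝓝[≠] x) (𝓝 (c ^ 2)) := by
  refine Tendsto.congr' ?_ (tendsto_term_eqz he (hφ.pow 2))
  filter_upwards [self_mem_nhdsWithin] with z hz
  have ht : z - x ≠ 0 := sub_ne_zero.mpr hz
  rw [zpow_add₀ ht, zpow_add₀ ht]
  ring

end CGL3Aux

/-- At a pole `ξ₁` of a meromorphic solution `(M, ψ)` of the CGL3 traveling-wave system,
`M` has a double pole with `m₀ = lim (ξ−ξ₁)² M` satisfying `d_i² m₀² − 9 d_r m₀ − 18 = 0`,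
and `ψ` has a simple pole with residue `d_i m₀/3`. -/
theorem cgl3_first_set_of_poles
    (csi d_r d_i g_r g_i : ℝ) (hd : d_i ≠ 0) (ξ₁ : ℂ)
    (M ψ : ℂ → ℂ) (hM : MeromorphicAt M ξ₁) (hψ : MeromorphicAt ψ ξ₁)
    (heq : ∀ᶠ z in 𝓝[≠] ξ₁,
      (deriv (deriv M) z / (2 * M z) - (deriv M z)^2 / (4 * (M z)^2)
        - (csi : ℂ) * deriv M z / (2 * M z) - (ψ z)^2
        + (d_r : ℂ) * M z + (g_i : ℂ) = 0)
      ∧ (deriv ψ z + ψ z * deriv M z / M z - (csi : ℂ) * ψ z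
        + (d_i : ℂ) * M z - (g_r : ℂ) = 0))
    (hpole : IsPole M ξ₁) :
    ∃ m₀ : ℂ, m₀ ≠ 0
      ∧ Tendsto (fun z => (z - ξ₁)^2 * M z) (𝓝[≠] ξ₁) (𝓝 m₀)
      ∧ IsPole ψ ξ₁
      ∧ Tendsto (fun z => (z - ξ₁) * ψ z) (𝓝[≠] ξ₁) (𝓝 ((d_i : ℂ) * m₀ / 3))
      ∧ (d_i : ℂ)^2 * m₀^2 - 9 * (d_r : ℂ) * m₀ - 18 = 0 := by
  haveI hNB : (𝓝[≠] ξ₁).NeBot := NormedField.nhdsNE_neBot ξ₁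
  have hdC : (d_i : ℂ) ≠ 0 := Complex.ofReal_ne_zero.mpr hd
  -- M has finite negative order
  have horder_ne_top : meromorphicOrderAt M ξ₁ ≠ ⊤ := by
    intro htop
    have h0 : ∀ᶠ z in 𝓝[≠] ξ₁, M z = 0 := meromorphicOrderAt_eq_top_iff.mp htop
    have hT : Tendsto (fun w => ‖M w‖) (𝓝[≠] ξ₁) (𝓝 0) := by
      refine Tendsto.congr' ?_ tendsto_const_nhds
      filter_upwards [h0] with z hz
      simp [hz]
    exact not_tendsto_atTop_of_tendsto_nhds hT hpole
  obtain ⟨N, hN⟩ := WithTop.ne_top_iff_exists.mp horder_ne_top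
  obtain ⟨g, hg, hgx, hMrep0⟩ := (meromorphicOrderAt_eq_int_iff (n := N) hM).mp hN.symm
  have hMrepN : M =ᶠ[𝓝[≠] ξ₁] fun z => (z - ξ₁) ^ N * g z := by
    filter_upwards [hMrep0] with z hz
    simpa [smul_eq_mul] using hz
  have tg : Tendsto g (𝓝[≠] ξ₁) (𝓝 (g ξ₁)) :=
    (hg.continuousAt.tendsto).mono_left nhdsWithin_le_nhds
  have hNneg : N < 0 := by
    by_contra hge
    push_neg at hge
    have hc : ∃ c : ℂ, Tendsto M (𝓝[≠] ξ₁) (𝓝 c) := by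
      rcases eq_or_lt_of_le hge with h0 | hposN
      · exact ⟨g ξ₁, Tendsto.congr' hMrepN.symm (CGL3Aux.tendsto_term_eqz h0.symm tg)⟩
      · exact ⟨0, Tendsto.congr' hMrepN.symm (CGL3Aux.tendsto_term_pos hposN tg)⟩
    obtain ⟨c, hc⟩ := hc
    exact not_tendsto_atTop_of_tendsto_nhds ((continuous_norm.tendsto c).comp hc) hpole
  obtain ⟨n, hn, hNn⟩ : ∃ n : ℤ, 1 ≤ n ∧ N = -n := ⟨-N, by omega, by omega⟩
  subst hNn
  have hMrep : M =ᶠ[𝓝[≠] ξ₁] fun z => (z - ξ₁) ^ (-n) * g z := hMrepN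
  -- first and second derivative representations for M
  obtain ⟨g1, hg1, hg1x, hM1⟩ : ∃ g1 : ℂ → ℂ, AnalyticAt ℂ g1 ξ₁
      ∧ g1 ξ₁ = -(n : ℂ) * g ξ₁
      ∧ deriv M =ᶠ[𝓝[≠] ξ₁] fun z => (z - ξ₁) ^ (-n - 1) * g1 z := by
    refine ⟨_, ?_, ?_, CGL3Aux.rep_deriv (-n) hg hMrep⟩
    · exact (analyticAt_const.mul hg).add
        ((analyticAt_id.sub analyticAt_const).mul (CGL3Aux.analyticAt_deriv hg))
    · rw [sub_self, zero_mul, add_zero]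
      push_cast
      ring
  obtain ⟨g2, hg2, hg2x, hM2⟩ : ∃ g2 : ℂ → ℂ, AnalyticAt ℂ g2 ξ₁
      ∧ g2 ξ₁ = (n : ℂ) * ((n : ℂ) + 1) * g ξ₁
      ∧ deriv (deriv M) =ᶠ[𝓝[≠] ξ₁] fun z => (z - ξ₁) ^ (-n - 1 - 1) * g2 z := by
    refine ⟨_, ?_, ?_, CGL3Aux.rep_deriv (-n - 1) hg1 hM1⟩
    · exact (analyticAt_const.mul hg1).add
        ((analyticAt_id.sub analyticAt_const).mul (CGL3Aux.analyticAt_deriv hg1))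
    · rw [sub_self, zero_mul, add_zero, hg1x]
      push_cast
      ring
  -- ψ has finite order
  have hψtop : meromorphicOrderAt ψ ξ₁ ≠ ⊤ := by
    intro htop
    have h0 : ∀ᶠ z in 𝓝[≠] ξ₁, ψ z = 0 := meromorphicOrderAt_eq_top_iff.mp htop
    have hd0 : deriv ψ =ᶠ[𝓝[≠] ξ₁] deriv (fun _ : ℂ => (0 : ℂ)) :=
      CGL3Aux.deriv_congr_punctured h0
    have hMc : M =ᶠ[𝓝[≠] ξ₁] fun _ => ((g_r : ℂ) / (d_i : ℂ)) := by
      filter_upwards [heq, h0, hd0] with z hz1 hz2 hz3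
      have h4 := hz1.2
      rw [hz2, hz3] at h4
      simp only [deriv_const, zero_mul, zero_div, mul_zero, zero_add, add_zero, zero_sub,
        sub_zero, zero_mul] at h4
      rw [eq_div_iff hdC]
      linear_combination h4
    have hT : Tendsto M (𝓝[≠] ξ₁) (𝓝 ((g_r : ℂ) / (d_i : ℂ))) :=
      Tendsto.congr' hMc.symm tendsto_const_nhds
    exact not_tendsto_atTop_of_tendsto_nhds
      ((continuous_norm.tendsto _).comp hT) hpole
  obtain ⟨k, hkk⟩ := WithTop.ne_top_iff_exists.mp hψtop
  obtain ⟨h, hh, hhx, hψrep0⟩ := (meromorphicOrderAt_eq_int_iff (n := k) hψ).mp hkk.symm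
  have hψrep : ψ =ᶠ[𝓝[≠] ξ₁] fun z => (z - ξ₁) ^ k * h z := by
    filter_upwards [hψrep0] with z hz
    simpa [smul_eq_mul] using hz
  obtain ⟨h1, hh1, hh1x, hψ1⟩ : ∃ h1 : ℂ → ℂ, AnalyticAt ℂ h1 ξ₁
      ∧ h1 ξ₁ = (k : ℂ) * h ξ₁
      ∧ deriv ψ =ᶠ[𝓝[≠] ξ₁] fun z => (z - ξ₁) ^ (k - 1) * h1 z := by
    refine ⟨_, ?_, ?_, CGL3Aux.rep_deriv k hh hψrep⟩
    · exact (analyticAt_const.mul hh).add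
        ((analyticAt_id.sub analyticAt_const).mul (CGL3Aux.analyticAt_deriv hh))
    · rw [sub_self, zero_mul, add_zero]
  -- basic limits
  have tg1 : Tendsto g1 (𝓝[≠] ξ₁) (𝓝 (g1 ξ₁)) :=
    (hg1.continuousAt.tendsto).mono_left nhdsWithin_le_nhds
  have tg2 : Tendsto g2 (𝓝[≠] ξ₁) (𝓝 (g2 ξ₁)) :=
    (hg2.continuousAt.tendsto).mono_left nhdsWithin_le_nhds
  have th : Tendsto h (𝓝[≠] ξ₁) (𝓝 (h ξ₁)) :=
    (hh.continuousAt.tendsto).mono_left nhdsWithin_le_nhds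
  have th1 : Tendsto h1 (𝓝[≠] ξ₁) (𝓝 (h1 ξ₁)) :=
    (hh1.continuousAt.tendsto).mono_left nhdsWithin_le_nhds
  have h2gx : (2 : ℂ) * g ξ₁ ≠ 0 := mul_ne_zero two_ne_zero hgx
  have h4gx : (4 : ℂ) * g ξ₁ ^ 2 ≠ 0 := mul_ne_zero (by norm_num) (pow_ne_zero 2 hgx)
  -- key limit identity for the second (cubic) equation
  have key2 : ∀ q : ℤ, ∀ L : ℂ,
      Tendsto (fun z => (z - ξ₁) ^ q * ((z - ξ₁) ^ (k - 1) * h1 z)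
        + (z - ξ₁) ^ q * ((z - ξ₁) ^ (k + (-n - 1) - -n) * (h z * g1 z / g z))
        - (z - ξ₁) ^ q * ((z - ξ₁) ^ k * ((csi : ℂ) * h z))
        + (z - ξ₁) ^ q * ((z - ξ₁) ^ (-n) * ((d_i : ℂ) * g z))
        - (z - ξ₁) ^ q * (g_r : ℂ)) (𝓝[≠] ξ₁) (𝓝 L) → L = 0 := by
    intro q L hT
    have h0 : ∀ᶠ z in 𝓝[≠] ξ₁, ((z - ξ₁) ^ q * ((z - ξ₁) ^ (k - 1) * h1 z)
        + (z - ξ₁) ^ q * ((z - ξ₁) ^ (k + (-n - 1) - -n) * (h z * g1 z / g z))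
        - (z - ξ₁) ^ q * ((z - ξ₁) ^ k * ((csi : ℂ) * h z))
        + (z - ξ₁) ^ q * ((z - ξ₁) ^ (-n) * ((d_i : ℂ) * g z))
        - (z - ξ₁) ^ q * (g_r : ℂ)) = 0 := by
      filter_upwards [hψrep, hψ1, hMrep, hM1, heq, self_mem_nhdsWithin]
        with z e1 e2 e3 e4 e5 hzx
      have ht : z - ξ₁ ≠ 0 := sub_ne_zero.mpr hzx
      have E2 : (z - ξ₁) ^ q * (deriv ψ z + ψ z * deriv M z / M z - (csi : ℂ) * ψ z
          + (d_i : ℂ) * M z - (g_r : ℂ)) = 0 := by rw [e5.2, mul_zero]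
      rw [← E2, e1, e2, e3, e4,
        mul_mul_mul_comm ((z - ξ₁) ^ k) (h z) ((z - ξ₁) ^ (-n - 1)) (g1 z),
        ← zpow_add₀ ht k (-n - 1), CGL3Aux.quot_helper ht]
      ring
    exact tendsto_nhds_unique hT (Tendsto.congr' (EventuallyEq.symm h0) tendsto_const_nhds)
  -- key limit identity for the first equation
  have key1 : ∀ p : ℤ, ∀ L : ℂ,
      Tendsto (fun z => (z - ξ₁) ^ p * ((z - ξ₁) ^ (-n - 1 - 1 - -n) * (g2 z / (2 * g z)))
        - (z - ξ₁) ^ p * ((z - ξ₁) ^ (-n - 1 + (-n - 1) - (-n + -n)) * (g1 z ^ 2 / (4 * g z ^ 2)))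
        - (z - ξ₁) ^ p * ((z - ξ₁) ^ (-n - 1 - -n) * ((csi : ℂ) * g1 z / (2 * g z)))
        - (z - ξ₁) ^ p * (((z - ξ₁) ^ k * h z) ^ 2)
        + (z - ξ₁) ^ p * ((z - ξ₁) ^ (-n) * ((d_r : ℂ) * g z))
        + (z - ξ₁) ^ p * (g_i : ℂ)) (𝓝[≠] ξ₁) (𝓝 L) → L = 0 := by
    intro p L hT
    have h0 : ∀ᶠ z in 𝓝[≠] ξ₁, ((z - ξ₁) ^ p * ((z - ξ₁) ^ (-n - 1 - 1 - -n) * (g2 z / (2 * g z)))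
        - (z - ξ₁) ^ p * ((z - ξ₁) ^ (-n - 1 + (-n - 1) - (-n + -n)) * (g1 z ^ 2 / (4 * g z ^ 2)))
        - (z - ξ₁) ^ p * ((z - ξ₁) ^ (-n - 1 - -n) * ((csi : ℂ) * g1 z / (2 * g z)))
        - (z - ξ₁) ^ p * (((z - ξ₁) ^ k * h z) ^ 2)
        + (z - ξ₁) ^ p * ((z - ξ₁) ^ (-n) * ((d_r : ℂ) * g z))
        + (z - ξ₁) ^ p * (g_i : ℂ)) = 0 := by
      filter_upwards [hψrep, hMrep, hM1, hM2, heq, self_mem_nhdsWithin]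
        with z e1 e3 e4 e6 e5 hzx
      have ht : z - ξ₁ ≠ 0 := sub_ne_zero.mpr hzx
      have E1 : (z - ξ₁) ^ p * (deriv (deriv M) z / (2 * M z)
          - (deriv M z)^2 / (4 * (M z)^2)
          - (csi : ℂ) * deriv M z / (2 * M z) - (ψ z)^2
          + (d_r : ℂ) * M z + (g_i : ℂ)) = 0 := by rw [e5.1, mul_zero]
      rw [← E1, e1, e3, e4, e6,
        mul_pow ((z - ξ₁) ^ (-n - 1)) (g1 z) 2,
        mul_pow ((z - ξ₁) ^ (-n)) (g z) 2,
        pow_two ((z - ξ₁) ^ (-n - 1)), pow_two ((z - ξ₁) ^ (-n)),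
        ← zpow_add₀ ht (-n - 1) (-n - 1), ← zpow_add₀ ht (-n) (-n),
        show (2 : ℂ) * ((z - ξ₁) ^ (-n) * g z) = (z - ξ₁) ^ (-n) * (2 * g z) from by ring,
        show (4 : ℂ) * ((z - ξ₁) ^ (-n + -n) * g z ^ 2)
          = (z - ξ₁) ^ (-n + -n) * (4 * g z ^ 2) from by ring,
        show (csi : ℂ) * ((z - ξ₁) ^ (-n - 1) * g1 z)
          = (z - ξ₁) ^ (-n - 1) * ((csi : ℂ) * g1 z) from by ring]
      rw [CGL3Aux.quot_helper ht, CGL3Aux.quot_helper ht, CGL3Aux.quot_helper ht]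
      ring
    exact tendsto_nhds_unique hT (Tendsto.congr' (EventuallyEq.symm h0) tendsto_const_nhds)
  -- determine the order of ψ : k = 1 - n
  have hkle : k ≤ 1 - n := by
    by_contra hcon
    push_neg at hcon
    have hL := key2 n _
      (((((CGL3Aux.tendsto_term2_pos (by omega) th1).add
          (CGL3Aux.tendsto_term2_pos (by omega) ((th.mul tg1).div tg hgx))).sub
          (CGL3Aux.tendsto_term2_pos (by omega) (tendsto_const_nhds.mul th))).add
          (CGL3Aux.tendsto_term2_eqz (by omega) (tendsto_const_nhds.mul tg))).sub
          (CGL3Aux.tendsto_term_pos (by omega) tendsto_const_nhds))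
    have hzero : (d_i : ℂ) * g ξ₁ = 0 := by linear_combination hL
    rcases mul_eq_zero.mp hzero with hc | hc
    · exact hdC hc
    · exact hgx hc
  have hkge : 1 - n ≤ k := by
    by_contra hcon
    push_neg at hcon
    have hL := key2 (1 - k) _
      (((((CGL3Aux.tendsto_term2_eqz (by omega) th1).add
          (CGL3Aux.tendsto_term2_eqz (by omega) ((th.mul tg1).div tg hgx))).sub
          (CGL3Aux.tendsto_term2_pos (by omega) (tendsto_const_nhds.mul th))).add
          (CGL3Aux.tendsto_term2_pos (by omega) (tendsto_const_nhds.mul tg))).sub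
          (CGL3Aux.tendsto_term_pos (by omega) tendsto_const_nhds))
    have hc2 : h ξ₁ * g1 ξ₁ / g ξ₁ = -(n : ℂ) * h ξ₁ := by
      rw [hg1x]
      field_simp
    rw [hh1x, hc2] at hL
    have hstep : ((k : ℂ) - (n : ℂ)) * h ξ₁ = 0 := by linear_combination hL
    rcases mul_eq_zero.mp hstep with hc | hc
    · have : (k : ℂ) = (n : ℂ) := by linear_combination hc
      have : k = n := by exact_mod_cast this
      omega
    · exact hhx hc
  have hk : k = 1 - n := by omega
  subst hk
  -- residue relation : (1 - 2n) h(ξ₁) + d_i g(ξ₁) = 0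
  have hres : (1 - 2 * (n : ℂ)) * h ξ₁ + (d_i : ℂ) * g ξ₁ = 0 := by
    have hL := key2 n _
      (((((CGL3Aux.tendsto_term2_eqz (by omega) th1).add
          (CGL3Aux.tendsto_term2_eqz (by omega) ((th.mul tg1).div tg hgx))).sub
          (CGL3Aux.tendsto_term2_pos (by omega) (tendsto_const_nhds.mul th))).add
          (CGL3Aux.tendsto_term2_eqz (by omega) (tendsto_const_nhds.mul tg))).sub
          (CGL3Aux.tendsto_term_pos (by omega) tendsto_const_nhds))
    have hc2 : h ξ₁ * g1 ξ₁ / g ξ₁ = -(n : ℂ) * h ξ₁ := by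
      rw [hg1x]
      field_simp
    rw [hh1x, hc2] at hL
    push_cast at hL
    linear_combination hL
  -- determine n = 2
  rcases (by omega : n = 1 ∨ n = 2 ∨ 3 ≤ n) with hn1 | hn2 | hn3
  · -- n = 1 is impossible
    exfalso
    subst hn1
    have hL := key1 2 _
      ((((((CGL3Aux.tendsto_term2_eqz (by norm_num)
            (tg2.div (tendsto_const_nhds.mul tg) h2gx)).sub
          (CGL3Aux.tendsto_term2_eqz (by norm_num)
            ((tg1.pow 2).div (tendsto_const_nhds.mul (tg.pow 2)) h4gx))).sub
          (CGL3Aux.tendsto_term2_pos (by norm_num)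
            ((tendsto_const_nhds.mul tg1).div (tendsto_const_nhds.mul tg) h2gx))).sub
          (CGL3Aux.tendsto_term2_sq_pos (by norm_num) th)).add
          (CGL3Aux.tendsto_term2_pos (by norm_num) (tendsto_const_nhds.mul tg))).add
          (CGL3Aux.tendsto_term_pos (by norm_num) tendsto_const_nhds))
    have hcA : g2 ξ₁ / (2 * g ξ₁) = 1 := by
      rw [hg2x, div_eq_iff h2gx]
      push_cast
      ring
    have hcB : g1 ξ₁ ^ 2 / (4 * g ξ₁ ^ 2) = 1 / 4 := by
      rw [hg1x, div_eq_iff h4gx]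
      push_cast
      ring
    rw [hcA, hcB] at hL
    norm_num at hL
  · -- the main case n = 2
    subst hn2
    -- h ξ₁ = d_i g ξ₁ / 3
    have hh3 : h ξ₁ = (d_i : ℂ) * g ξ₁ / 3 := by
      push_cast at hres
      field_simp
      linear_combination -hres
    -- equation from the first equation at p = 2
    have hL := key1 2 _
      ((((((CGL3Aux.tendsto_term2_eqz (by norm_num)
            (tg2.div (tendsto_const_nhds.mul tg) h2gx)).sub
          (CGL3Aux.tendsto_term2_eqz (by norm_num)
            ((tg1.pow 2).div (tendsto_const_nhds.mul (tg.pow 2)) h4gx))).sub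
          (CGL3Aux.tendsto_term2_pos (by norm_num)
            ((tendsto_const_nhds.mul tg1).div (tendsto_const_nhds.mul tg) h2gx))).sub
          (CGL3Aux.tendsto_term2_sq_eqz (by norm_num) th)).add
          (CGL3Aux.tendsto_term2_eqz (by norm_num) (tendsto_const_nhds.mul tg))).add
          (CGL3Aux.tendsto_term_pos (by norm_num) tendsto_const_nhds))
    have hcA : g2 ξ₁ / (2 * g ξ₁) = 3 := by
      rw [hg2x, div_eq_iff h2gx]
      push_cast
      ring
    have hcB : g1 ξ₁ ^ 2 / (4 * g ξ₁ ^ 2) = 1 := by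
      rw [hg1x, div_eq_iff h4gx]
      push_cast
      ring
    rw [hcA, hcB] at hL
    have heq1' : 2 - h ξ₁ ^ 2 + (d_r : ℂ) * g ξ₁ = 0 := by linear_combination hL
    refine ⟨g ξ₁, hgx, ?_, ?_, ?_, ?_⟩
    · -- (z - ξ₁)^2 * M → g ξ₁
      refine Tendsto.congr' ?_ tg
      filter_upwards [hMrep, self_mem_nhdsWithin] with z hz hzx
      have ht : z - ξ₁ ≠ 0 := sub_ne_zero.mpr hzx
      rw [hz, zpow_neg, zpow_two, pow_two, mul_inv_cancel_left₀ (mul_ne_zero ht ht)]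
    · -- ψ has a pole
      have habs : Tendsto (fun z => ‖z - ξ₁‖) (𝓝[≠] ξ₁) (𝓝[>] 0) := by
        rw [tendsto_nhdsWithin_iff]
        constructor
        · have hc : Continuous fun z : ℂ => ‖z - ξ₁‖ :=
            continuous_norm.comp (continuous_id.sub continuous_const)
          have := hc.tendsto ξ₁
          simpa using this.mono_left nhdsWithin_le_nhds
        · filter_upwards [self_mem_nhdsWithin] with z hz
          exact Set.mem_Ioi.mpr (norm_pos_iff.mpr (sub_ne_zero.mpr hz))
      have hinv : Tendsto (fun z => (‖z - ξ₁‖)⁻¹) (𝓝[≠] ξ₁) atTop :=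
        tendsto_inv_nhdsGT_zero.comp habs
      have habsh : Tendsto (fun z => ‖h z‖) (𝓝[≠] ξ₁) (𝓝 (‖h ξ₁‖)) :=
        (continuous_norm.tendsto _).comp th
      have hfull := Filter.Tendsto.pos_mul_atTop (norm_pos_iff.mpr hhx) habsh hinv
      refine Tendsto.congr' ?_ hfull
      filter_upwards [hψrep, self_mem_nhdsWithin] with z hz hzx
      have ht : z - ξ₁ ≠ 0 := sub_ne_zero.mpr hzx
      rw [hz]
      simp [norm_mul, norm_zpow]
      ring
    · -- residue of ψ
      have hT : Tendsto (fun z => (z - ξ₁) * ψ z) (𝓝[≠] ξ₁) (𝓝 (h ξ₁)) := by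
        refine Tendsto.congr' ?_ th
        filter_upwards [hψrep, self_mem_nhdsWithin] with z hz hzx
        have ht : z - ξ₁ ≠ 0 := sub_ne_zero.mpr hzx
        rw [hz]
        rw [show ((1 : ℤ) - 2) = -1 from by norm_num, zpow_neg, zpow_one,
          mul_inv_cancel_left₀ ht]
      rwa [hh3] at hT
    · -- the quadratic relation for m₀
      linear_combination (-9 : ℂ) * heq1' + (-9 * (h ξ₁ + (d_i : ℂ) * g ξ₁ / 3)) * hh3
  · -- n ≥ 3 is impossible
    exfalso
    have hL := key1 (2 * n - 2) _
      ((((((CGL3Aux.tendsto_term2_pos (by omega)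
            (tg2.div (tendsto_const_nhds.mul tg) h2gx)).sub
          (CGL3Aux.tendsto_term2_pos (by omega)
            ((tg1.pow 2).div (tendsto_const_nhds.mul (tg.pow 2)) h4gx))).sub
          (CGL3Aux.tendsto_term2_pos (by omega)
            ((tendsto_const_nhds.mul tg1).div (tendsto_const_nhds.mul tg) h2gx))).sub
          (CGL3Aux.tendsto_term2_sq_eqz (by omega) th)).add
          (CGL3Aux.tendsto_term2_pos (by omega) (tendsto_const_nhds.mul tg))).add
          (CGL3Aux.tendsto_term_pos (by omega) tendsto_const_nhds))
    have hsq : h ξ₁ ^ 2 = 0 := by linear_combination -hL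
    exact hhx (pow_eq_zero_iff two_ne_zero |>.mp hsq)
end

section
/- Let csi ∈ ℝ and ey ∈ ℝ, let ξ₀ ∈ ℂ, and let D be meromorphic on a neighborhood of ξ₀ with a pole at ξ₀, satisfying on a punctured neighborhood of ξ₀ the ODE (2·D' + csi·D + 24i·ey)·(D' − csi·D − 24i·ey)² + 2^{−11}·(16·(4·D³ − 3·csi·D²) − 9·(csi² + 64i·ey)·(4·D + csi))² = 0. Then the pole of D at ξ₀ is simple and its residue δ satisfies δ³ = 1, i.e. δ ∈ {1, (−1 + i·√3)/2, (−1 − i·√3)/2}. -/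
open Filter Topology

private lemma ev_deriv_eq {f g : ℂ → ℂ} {x : ℂ} (h : ∀ᶠ z in 𝓝[≠] x, f z = g z) :
    ∀ᶠ z in 𝓝[≠] x, deriv f z = deriv g z := by
  obtain ⟨u, hu, hxu, hsub⟩ := mem_nhdsWithin.mp h
  have hmem : u ∩ {x}ᶜ ∈ 𝓝[≠] x := mem_nhdsWithin.mpr ⟨u, hu, hxu, subset_rfl⟩
  filter_upwards [hmem] with z hz
  have hopen : IsOpen (u ∩ {x}ᶜ) := hu.inter isOpen_compl_singleton
  exact Filter.EventuallyEq.deriv_eq <|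
    Filter.eventually_of_mem (hopen.mem_nhds hz) fun w hw => hsub hw

private lemma contAt_deriv {g : ℂ → ℂ} {x : ℂ} (hg : AnalyticAt ℂ g x) :
    ContinuousAt (deriv g) x := by
  have h2 : ContinuousAt (fun z => fderiv ℂ g z 1) x :=
    ((ContinuousLinearMap.apply ℂ ℂ (1:ℂ)).continuous.continuousAt).comp hg.fderiv.continuousAt
  exact h2.congr (by filter_upwards with z using fderiv_apply_one_eq_deriv)

/-- Any pole of a meromorphic solution `D` of the first-order third-degree subequation
for `dlogA` is simple, with residue a cube root of unity. -/
theorem cgl5_dlogA_subequation_pole_residues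
    (csi ey : ℝ) (ξ₀ : ℂ)
    (D : ℂ → ℂ) (hD : MeromorphicAt D ξ₀) (hpole : IsPole D ξ₀)
    (hode : ∀ᶠ z in 𝓝[≠] ξ₀,
      (2 * deriv D z + (csi : ℂ) * D z + 24 * Complex.I * (ey : ℂ))
        * (deriv D z - (csi : ℂ) * D z - 24 * Complex.I * (ey : ℂ))^2
      + (2 : ℂ)^(-11 : ℤ)
        * (16 * (4 * (D z)^3 - 3 * (csi : ℂ) * (D z)^2)
            - 9 * ((csi : ℂ)^2 + 64 * Complex.I * (ey : ℂ)) * (4 * D z + (csi : ℂ)))^2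
      = 0) :
    ∃ δ : ℂ, Tendsto (fun z => (z - ξ₀) * D z) (𝓝[≠] ξ₀) (𝓝 δ)
      ∧ δ^3 = 1
      ∧ (δ = 1 ∨ δ = (-1 + Complex.I * (Real.sqrt 3 : ℂ)) / 2
          ∨ δ = (-1 - Complex.I * (Real.sqrt 3 : ℂ)) / 2) := by
  -- the order of D at ξ₀ is a negative integer
  have hot : meromorphicOrderAt D ξ₀ ≠ ⊤ := by
    intro h
    rw [meromorphicOrderAt_eq_top_iff] at h
    have h0 : Tendsto (fun w => ‖D w‖) (𝓝[≠] ξ₀) (𝓝 0) := by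
      refine tendsto_const_nhds.congr' ?_
      filter_upwards [h] with z hz
      simp [hz]
    exact not_tendsto_nhds_of_tendsto_atTop hpole 0 h0
  obtain ⟨m0, hm0⟩ := WithTop.ne_top_iff_exists.mp hot
  have hneg : m0 < 0 := by
    by_contra hge
    push_neg at hge
    obtain ⟨g, hg, hgne, hEq⟩ := (meromorphicOrderAt_eq_int_iff (n := m0) hD).mp hm0.symm
    have hcont : ContinuousAt (fun z => (z - ξ₀) ^ m0.toNat * g z) ξ₀ :=
      (((continuous_id.sub continuous_const).pow m0.toNat).continuousAt).mul hg.continuousAt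
    have h0 : Tendsto (fun w => ‖D w‖) (𝓝[≠] ξ₀)
        (𝓝 ‖(ξ₀ - ξ₀) ^ m0.toNat * g ξ₀‖) := by
      refine Tendsto.congr' ?_
        ((continuous_norm.continuousAt.comp hcont).continuousWithinAt.tendsto)
      filter_upwards [hEq] with z hz
      simp only [Function.comp_apply, hz, smul_eq_mul]
      rw [← zpow_natCast (z - ξ₀) m0.toNat, Int.toNat_of_nonneg hge]
    exact not_tendsto_nhds_of_tendsto_atTop hpole _ h0
  obtain ⟨m, hm⟩ : ∃ m : ℕ, m0 = -(m + 1 : ℕ) := by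
    refine ⟨(-m0).toNat - 1, ?_⟩
    omega
  obtain ⟨g, hg, hgne, hEq⟩ := (meromorphicOrderAt_eq_int_iff (n := m0) hD).mp hm0.symm
  rw [hm] at hEq
  set n : ℕ := m + 1 with hn
  have hEq' : ∀ᶠ z in 𝓝[≠] ξ₀, D z = (z - ξ₀) ^ (-(n : ℤ)) * g z := by
    filter_upwards [hEq] with z hz
    simpa [smul_eq_mul] using hz
  -- eventual formula for the derivative
  have hgz : ∀ᶠ z in 𝓝[≠] ξ₀, AnalyticAt ℂ g z :=
    hg.eventually_analyticAt.filter_mono nhdsWithin_le_nhds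
  have hzne : ∀ᶠ z in 𝓝[≠] ξ₀, z ≠ ξ₀ := by
    filter_upwards [self_mem_nhdsWithin] with z hz using hz
  have hDeriv : ∀ᶠ z in 𝓝[≠] ξ₀,
      deriv D z = (z - ξ₀) ^ (-(n : ℤ) - 1) * ((z - ξ₀) * deriv g z - (n : ℂ) * g z) := by
    filter_upwards [ev_deriv_eq hEq', hgz, hzne] with z hd hza hz
    have hζ : z - ξ₀ ≠ 0 := sub_ne_zero.mpr hz
    have h1 : HasDerivAt (fun w => (w - ξ₀) ^ (-(n : ℤ)))
        (((-(n : ℤ)) : ℂ) * (z - ξ₀) ^ (-(n : ℤ) - 1)) z := by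
      have hc := (hasDerivAt_zpow (-(n : ℤ)) (z - ξ₀) (Or.inl hζ)).comp z
        ((hasDerivAt_id z).sub_const ξ₀)
      simpa [Function.comp_def] using hc
    have h3 : HasDerivAt g (deriv g z) z := hza.differentiableAt.hasDerivAt
    have h4 : HasDerivAt (fun w => (w - ξ₀) ^ (-(n : ℤ)) * g w) _ z := h1.mul h3
    rw [hd, h4.deriv]
    have hzp : (z - ξ₀) ^ (-(n : ℤ)) = (z - ξ₀) ^ (-(n : ℤ) - 1) * (z - ξ₀) := by
      rw [← zpow_add_one₀ hζ, sub_add_cancel]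
    rw [hzp]
    push_cast
    ring
  -- multiplied-through eventual identities
  have hB : ∀ᶠ z in 𝓝[≠] ξ₀, (z - ξ₀) ^ n * D z = g z := by
    filter_upwards [hEq', hzne] with z hz hne
    have hζ : z - ξ₀ ≠ 0 := sub_ne_zero.mpr hne
    rw [hz, ← mul_assoc, ← zpow_natCast (z - ξ₀) n, ← zpow_add₀ hζ]
    simp
  have hA : ∀ᶠ z in 𝓝[≠] ξ₀,
      (z - ξ₀) ^ (n + 1) * deriv D z = (z - ξ₀) * deriv g z - (n : ℂ) * g z := by
    filter_upwards [hDeriv, hzne] with z hz hne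
    have hζ : z - ξ₀ ≠ 0 := sub_ne_zero.mpr hne
    rw [hz, ← mul_assoc, ← zpow_natCast (z - ξ₀) (n + 1), ← zpow_add₀ hζ,
      show ((n + 1 : ℕ) : ℤ) + (-(n : ℤ) - 1) = 0 by push_cast; ring, zpow_zero, one_mul]
  -- the key auxiliary function
  set a : ℂ := (csi : ℂ) with ha
  set b : ℂ := 24 * Complex.I * (ey : ℂ) with hb
  set F : ℂ → ℂ := fun z =>
    (z - ξ₀) ^ (3 * m) *
      ((2 * ((z - ξ₀) * deriv g z - (n : ℂ) * g z) + a * (z - ξ₀) * g z + b * (z - ξ₀) ^ (m + 2))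
        * (((z - ξ₀) * deriv g z - (n : ℂ) * g z) - a * (z - ξ₀) * g z
            - b * (z - ξ₀) ^ (m + 2)) ^ 2)
    + (2048 : ℂ)⁻¹ * (64 * (g z) ^ 3 - 48 * a * (z - ξ₀) ^ (m + 1) * (g z) ^ 2
        - 9 * (a ^ 2 + 64 * Complex.I * (ey : ℂ))
            * (4 * (z - ξ₀) ^ (2 * m + 2) * g z + a * (z - ξ₀) ^ (3 * m + 3))) ^ 2
    with hF
  have h2048 : (2 : ℂ) ^ (-11 : ℤ) = (2048 : ℂ)⁻¹ := by norm_num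
  have hF0 : ∀ᶠ z in 𝓝[≠] ξ₀, F z = 0 := by
    filter_upwards [hode, hA, hB] with z he hAz hBz
    rw [h2048] at he
    have hX : (z - ξ₀) * deriv g z - (n : ℂ) * g z = (z - ξ₀) ^ (n + 1) * deriv D z := hAz.symm
    have hG : g z = (z - ξ₀) ^ n * D z := hBz.symm
    simp only [hF]
    rw [hX, hG, hn]
    have hn1 : m + 1 + 1 = m + 2 := by ring
    rw [hn1]
    linear_combination (z - ξ₀) ^ (6 * m + 6) * he
  -- continuity of F at ξ₀ and the limit equation
  have hgc : ContinuousAt g ξ₀ := hg.continuousAt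
  have hdc : ContinuousAt (deriv g) ξ₀ := contAt_deriv hg
  have hFc : ContinuousAt F ξ₀ := by
    rw [hF]
    fun_prop
  have ht1 : Tendsto F (𝓝[≠] ξ₀) (𝓝 (F ξ₀)) := hFc.continuousWithinAt.tendsto
  have ht2 : Tendsto F (𝓝[≠] ξ₀) (𝓝 0) :=
    tendsto_const_nhds.congr' (hF0.mono fun z h => h.symm)
  have hkey : F ξ₀ = 0 := tendsto_nhds_unique ht1 ht2
  set c : ℂ := g ξ₀ with hc
  -- evaluate F ξ₀
  have hval : F ξ₀ = (0 : ℂ) ^ (3 * m) * (-2 * ((n : ℂ) * c) ^ 3) + 2 * c ^ 6 := by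
    simp only [hF, sub_self]
    rw [zero_pow (by omega : m + 2 ≠ 0), zero_pow (by omega : m + 1 ≠ 0),
      zero_pow (by omega : 2 * m + 2 ≠ 0), zero_pow (by omega : 3 * m + 3 ≠ 0)]
    ring
  rw [hval] at hkey
  -- n must be 1
  rcases Nat.eq_zero_or_pos m with hm0' | hmpos
  · -- simple pole: m = 0, n = 1
    subst hm0'
    have hn1 : (n : ℂ) = 1 := by norm_num [hn]
    rw [hn1] at hkey
    norm_num at hkey
    -- hkey : -2 * c ^ 3 + 2 * c ^ 6 = 0  (some normal form)
    have hc3 : c ^ 3 = 1 := by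
      have hfac : 2 * c ^ 3 * (c ^ 3 - 1) = 0 := by linear_combination hkey
      rcases mul_eq_zero.mp hfac with h | h
      · exact absurd (by
          have : c ^ 3 = 0 := by linear_combination h / 2
          exact pow_eq_zero_iff (by norm_num) |>.mp this) hgne
      · linear_combination h
    refine ⟨c, ?_, hc3, ?_⟩
    · have : ∀ᶠ z in 𝓝[≠] ξ₀, g z = (z - ξ₀) * D z := by
        filter_upwards [hB] with z hz
        rw [← hz, hn]
        norm_num
      exact (hgc.continuousWithinAt.tendsto).congr' this
    · -- identify the cube roots of unity
      by_cases h1 : c = 1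
      · exact Or.inl h1
      · have hquad : c ^ 2 + c + 1 = 0 := by
          have : (c - 1) * (c ^ 2 + c + 1) = 0 := by linear_combination hc3
          rcases mul_eq_zero.mp this with h | h
          · exact absurd (by linear_combination h) h1
          · exact h
        have hsq : (Complex.I * (Real.sqrt 3 : ℂ)) ^ 2 = -3 := by
          rw [mul_pow, Complex.I_sq, ← Complex.ofReal_pow, Real.sq_sqrt (by norm_num : (3:ℝ) ≥ 0)]
          norm_num
        have hfac : (c - (-1 + Complex.I * (Real.sqrt 3 : ℂ)) / 2)
            * (c - (-1 - Complex.I * (Real.sqrt 3 : ℂ)) / 2) = 0 := by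
          linear_combination hquad - (1/4 : ℂ) * hsq
        rcases mul_eq_zero.mp hfac with h | h
        · exact Or.inr (Or.inl (by linear_combination h))
        · exact Or.inr (Or.inr (by linear_combination h))
  · -- higher-order pole: contradiction
    exfalso
    rw [zero_pow (by omega : 3 * m ≠ 0)] at hkey
    have : c ^ 6 = 0 := by linear_combination hkey / 2
    exact hgne (pow_eq_zero_iff (by norm_num) |>.mp this)
end

section
/- Let g₂, g₃ ∈ ℂ and e₁ ∈ ℂ with 4·e₁³ − g₂·e₁ − g₃ = 0. Let U ⊂ ℂ be open and connected, and let ℘₁ be a nonconstant holomorphic function on U satisfying (℘₁')² = 4·℘₁³ − g₂·℘₁ − g₃. Then the function f = ℘₁ − (g₂ − 12·e₁²)/(4·(℘₁ − e₁)), defined at points where ℘₁ ≠ e₁, satisfies (f')² = 4·f³ − G₂·f − G₃ with G₂ = 60·e₁² − 4·g₂ and G₃ = 88·e₁³ − 8·e₁·g₂. -/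
open Filter Topology

/-- Landen transformation at the level of the Weierstrass function: if `℘₁` satisfies
`(℘₁')² = 4℘₁³ − g₂℘₁ − g₃` and `e₁` is a root of `4t³ − g₂t − g₃`, then
`f = ℘₁ − (g₂ − 12e₁²)/(4(℘₁ − e₁))` satisfies `(f')² = 4f³ − G₂f − G₃` with
`G₂ = 60e₁² − 4g₂` and `G₃ = 88e₁³ − 8e₁g₂`. -/
theorem landen_transformation_weierstrass
    (g₂ g₃ e₁ : ℂ) (he : 4 * e₁^3 - g₂ * e₁ - g₃ = 0)
    (U : Set ℂ) (hU : IsOpen U) (hUc : IsConnected U)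
    (℘₁ : ℂ → ℂ) (h℘ : ∀ z ∈ U, AnalyticAt ℂ ℘₁ z)
    (hnc : ¬ ∀ z ∈ U, ∀ w ∈ U, ℘₁ z = ℘₁ w)
    (hode : ∀ z ∈ U, (deriv ℘₁ z)^2 = 4 * (℘₁ z)^3 - g₂ * ℘₁ z - g₃)
    (f : ℂ → ℂ)
    (hf : f = fun z => ℘₁ z - (g₂ - 12 * e₁^2) / (4 * (℘₁ z - e₁)))
    (G₂ G₃ : ℂ)
    (hG₂ : G₂ = 60 * e₁^2 - 4 * g₂) (hG₃ : G₃ = 88 * e₁^3 - 8 * e₁ * g₂) :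
    ∀ z ∈ U, ℘₁ z ≠ e₁ →
      (deriv f z)^2 = 4 * (f z)^3 - G₂ * f z - G₃ := by
  intro z hz hpe
  have hd : ℘₁ z - e₁ ≠ 0 := sub_ne_zero.mpr hpe
  have hden : (4 : ℂ) * (℘₁ z - e₁) ≠ 0 := by
    simp [hd]
  have hP : HasDerivAt ℘₁ (deriv ℘₁ z) z :=
    ((h℘ z hz).differentiableAt).hasDerivAt
  have hdenD : HasDerivAt (fun w => 4 * (℘₁ w - e₁)) (4 * deriv ℘₁ z) z := by
    simpa using ((hP.sub_const e₁).const_mul 4)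
  have hq : HasDerivAt (fun w => (g₂ - 12 * e₁^2) / (4 * (℘₁ w - e₁)))
      ((0 * (4 * (℘₁ z - e₁)) - (g₂ - 12 * e₁^2) * (4 * deriv ℘₁ z)) /
        (4 * (℘₁ z - e₁))^2) z :=
    (hasDerivAt_const z (g₂ - 12 * e₁^2)).div hdenD hden
  have hfD : HasDerivAt f
      (deriv ℘₁ z - (0 * (4 * (℘₁ z - e₁)) - (g₂ - 12 * e₁^2) * (4 * deriv ℘₁ z)) /
        (4 * (℘₁ z - e₁))^2) z := by
    rw [hf]; exact hP.sub hq
  rw [hfD.deriv, hf]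
  have hD := hode z hz
  have hg3 : g₃ = 4 * e₁^3 - g₂ * e₁ := by linear_combination -he
  rw [hg3] at hD
  rw [hG₂, hG₃]
  field_simp
  linear_combination ((4 * (℘₁ z - e₁)^2 + (g₂ - 12 * e₁^2))^2) * hD
end
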